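/- Every metric space (X, d) with asdim(X, d) ≤ n is coarsely equivalent to a metric space (Y, D) satisfying property (N2)_n: for every x, y_1, …, y_{n+2} ∈ Y there exist i, j ∈ {1, …, n+2} with i ≠ j such that D(y_i, y_j) ≤ D(x, y_i). -/

import Mathlib

/-- The distance between two subsets of a metric space:
`d(A, B) = inf {d(a, b) : a ∈ A, b ∈ B}`. -/
noncomputable def setDist {X : Type*} [MetricSpace X] (A B : Set X) : ℝ :=
  sInf {r : ℝ | ∃ a ∈ A, ∃ b ∈ B, dist a b = r}

/-- A family `𝒰` of subsets is `r`-disjoint if any two distinct members `U, V`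
satisfy `d(U, V) > r`. -/
def RDisjoint {X : Type*} [MetricSpace X] (r : ℝ) (𝒰 : Set (Set X)) : Prop :=
  ∀ U ∈ 𝒰, ∀ V ∈ 𝒰, U ≠ V → r < setDist U V

/-- A family of subsets covers `X`. -/
def IsCover {X : Type*} (𝒰 : Set (Set X)) : Prop :=
  ∀ x : X, ∃ U ∈ 𝒰, x ∈ U

/-- A family is uniformly bounded if the diameters of its members have a common bound. -/
def UnifBounded {X : Type*} [MetricSpace X] (𝒰 : Set (Set X)) : Prop :=
  ∃ M : ℝ, ∀ U ∈ 𝒰, ∀ x ∈ U, ∀ y ∈ U, dist x y ≤ M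

/-- `asdim(X, d) ≤ n`: for every `r > 0` there is a uniformly bounded covering of `X`
splitting into `n + 1` families, each of which is `r`-disjoint. -/
def AsdimLE (n : ℕ) (X : Type*) [MetricSpace X] : Prop :=
  ∀ r : ℝ, 0 < r → ∃ 𝒰 : Fin (n + 1) → Set (Set X),
    IsCover (⋃ i, 𝒰 i) ∧ UnifBounded (⋃ i, 𝒰 i) ∧ ∀ i, RDisjoint r (𝒰 i)

/-- `f` is a coarse map with respect to the distance functions `dX`, `dY`:
for every `δ > 0` there is `ε > 0` such that `dX a b ≤ δ` implies `dY (f a) (f b) ≤ ε`. -/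
def CoarseWith {X Y : Type*} (dX : X → X → ℝ) (dY : Y → Y → ℝ) (f : X → Y) : Prop :=
  ∀ δ : ℝ, 0 < δ → ∃ ε : ℝ, 0 < ε ∧ ∀ a b : X, dX a b ≤ δ → dY (f a) (f b) ≤ ε

/-- Property `(N2)_n` for a distance function `D`: for every `x, y₁, …, y_{n+2}` there
are `i ≠ j` with `D(yᵢ, yⱼ) ≤ D(x, yᵢ)`. -/
def N2Prop {Y : Type*} (n : ℕ) (D : Y → Y → ℝ) : Prop :=
  ∀ (x : Y) (y : Fin (n + 2) → Y), ∃ i j : Fin (n + 2), i ≠ j ∧ D (y i) (y j) ≤ D x (y i)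

universe u
namespace N2Aux

open Set
open scoped Classical

variable {X : Type u} [MetricSpace X]

lemma setDist_le {A B : Set X} {a b : X} (ha : a ∈ A) (hb : b ∈ B) :
    setDist A B ≤ dist a b := by
  apply csInf_le
  · refine ⟨0, ?_⟩
    rintro r ⟨a', _, b', _, rfl⟩
    exact dist_nonneg
  · exact ⟨a, ha, b, hb, rfl⟩

/-- enlargement of a set by `t` -/
def enl (t : ℝ) (V : Set X) : Set X := {x | ∃ v ∈ V, dist x v ≤ t}

lemma enl_self {t : ℝ} (ht : 0 ≤ t) {V : Set X} {v : X} (hv : v ∈ V) : v ∈ enl t V :=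
  ⟨v, hv, by simpa using ht⟩

def attachSet (P : Set (Set X)) (S : Set X) : Set X :=
  S ∪ ⋃₀ {W | W ∈ P ∧ (W ∩ S).Nonempty}

lemma subset_attachSet {P : Set (Set X)} {S : Set X} : S ⊆ attachSet P S :=
  Set.subset_union_left

def newFam (P G : Set (Set X)) (t : ℝ) : Set (Set X) :=
  (fun V => attachSet P (enl t V)) '' G ∪ {W | W ∈ P ∧ ∀ V ∈ G, W ∩ enl t V = ∅}

/-- distinct members of the family intersect only if equal -/
def AlmostDisj (F : Set (Set X)) : Prop := ∀ U ∈ F, ∀ V ∈ F, (U ∩ V).Nonempty → U = V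

def DiamBdd (F : Set (Set X)) (B : ℝ) : Prop := ∀ U ∈ F, ∀ p ∈ U, ∀ q ∈ U, dist p q ≤ B

structure Lvl (X : Type u) (n : ℕ) where
  fam : Fin (n+1) → Set (Set X)
  B : ℝ
  lam : ℝ

variable (n : ℕ) (h : AsdimLE n X)

noncomputable def covOf (r : ℝ) : Fin (n+1) → Set (Set X) :=
  Classical.choose (h (max r 1) (lt_of_lt_of_le one_pos (le_max_right r 1)))

lemma covOf_spec (r : ℝ) :
    IsCover (⋃ i, covOf n h r i) ∧ UnifBounded (⋃ i, covOf n h r i) ∧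
      ∀ i, RDisjoint (max r 1) (covOf n h r i) :=
  Classical.choose_spec (h (max r 1) (lt_of_lt_of_le one_pos (le_max_right r 1)))

lemma covOf_cover (r : ℝ) (x : X) : ∃ c U, U ∈ covOf n h r c ∧ x ∈ U := by
  obtain ⟨U, hU, hx⟩ := (covOf_spec n h r).1 x
  rw [Set.mem_iUnion] at hU
  obtain ⟨c, hc⟩ := hU
  exact ⟨c, U, hc, hx⟩

noncomputable def bndOf (r : ℝ) : ℝ :=
  max (Classical.choose (covOf_spec n h r).2.1) 0

lemma bndOf_nonneg (r : ℝ) : 0 ≤ bndOf n h r := le_max_right _ _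

lemma bndOf_bound (r : ℝ) (c : Fin (n+1)) {U : Set X} (hU : U ∈ covOf n h r c)
    {p q : X} (hp : p ∈ U) (hq : q ∈ U) : dist p q ≤ bndOf n h r := by
  have hM := Classical.choose_spec (covOf_spec n h r).2.1
  have : U ∈ ⋃ i, covOf n h r i := Set.mem_iUnion.2 ⟨c, hU⟩
  exact le_trans (hM U this p hp q hq) (le_max_left _ _)

lemma covOf_sep (r : ℝ) (c : Fin (n+1)) {U V : Set X} (hU : U ∈ covOf n h r c)
    (hV : V ∈ covOf n h r c) (hUV : U ≠ V) {a b : X} (ha : a ∈ U) (hb : b ∈ V) :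
    r < dist a b := by
  have h1 : (max r 1 : ℝ) < setDist U V := (covOf_spec n h r).2.2 c U hU V hV hUV
  calc r ≤ max r 1 := le_max_left _ _
    _ < setDist U V := h1
    _ ≤ dist a b := setDist_le ha hb

noncomputable def mkLvl (lam prevB : ℝ) (P : Fin (n+1) → Set (Set X)) : Lvl X n where
  fam := fun c => newFam (P c) (covOf n h (2*lam + 3*prevB + 1) c) lam
  B := bndOf n h (2*lam + 3*prevB + 1) + 2*lam + 2*prevB
  lam := lam

section mkLvlProps

variable {lam prevB : ℝ} {P : Fin (n+1) → Set (Set X)}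
/-- every point of an attached set is within `prevB + lam` of the core raw set -/
lemma attach_near (hPB : ∀ c, DiamBdd (P c) prevB) (hpB : 0 ≤ prevB) (c : Fin (n+1))
    {V : Set X} {p : X} (hp : p ∈ attachSet (P c) (enl lam V)) :
    ∃ v ∈ V, dist p v ≤ prevB + lam := by
  have key : ∃ s ∈ enl lam V, dist p s ≤ prevB := by
    rcases hp with hS | hW
    · exact ⟨p, hS, by simpa using hpB⟩
    · obtain ⟨W, ⟨hWP, w0, hw0W, hw0S⟩, hpW⟩ := hW
      exact ⟨w0, hw0S, hPB c W hWP p hpW w0 hw0W⟩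
  obtain ⟨s, ⟨v, hv, hsv⟩, hps⟩ := key
  exact ⟨v, hv, le_trans (dist_triangle p s v) (add_le_add hps hsv)⟩

lemma mkLvl_almostDisj (hP : ∀ c, AlmostDisj (P c)) (hPB : ∀ c, DiamBdd (P c) prevB)
    (hpB : 0 ≤ prevB) (c : Fin (n+1)) : AlmostDisj ((mkLvl n h lam prevB P).fam c) := by
  set r : ℝ := 2*lam + 3*prevB + 1 with hr
  -- helper: image member and orphan member are disjoint
  have himor : ∀ V₁ ∈ covOf n h r c, ∀ W ∈ P c, (∀ V ∈ covOf n h r c, W ∩ enl lam V = ∅) →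
      (attachSet (P c) (enl lam V₁) ∩ W).Nonempty → False := by
    intro V₁ hV₁ W hWP horph ⟨x, hx1, hx2⟩
    rcases hx1 with hS | hU
    · have : x ∈ W ∩ enl lam V₁ := ⟨hx2, hS⟩
      rw [horph V₁ hV₁] at this
      exact this
    · obtain ⟨W₂, ⟨hW₂P, hW₂ne⟩, hxW₂⟩ := hU
      have : W₂ = W := hP c W₂ hW₂P W hWP ⟨x, hxW₂, hx2⟩
      rw [this] at hW₂ne
      obtain ⟨z, hz⟩ := hW₂ne
      have := horph V₁ hV₁
      rw [this] at hz
      exact hz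
  rintro U hU V hV ⟨x, hxU, hxV⟩
  rcases hU with ⟨V₁, hV₁, rfl⟩ | ⟨hUP, hUor⟩
  · rcases hV with ⟨V₂, hV₂, rfl⟩ | ⟨hVP, hVor⟩
    · by_cases hVV : V₁ = V₂
      · rw [hVV]
      · exfalso
        obtain ⟨v₁, hv₁, hd₁⟩ := attach_near n hPB hpB c hxU
        obtain ⟨v₂, hv₂, hd₂⟩ := attach_near n hPB hpB c hxV
        have hsep := covOf_sep n h r c hV₁ hV₂ hVV hv₁ hv₂
        have : dist v₁ v₂ ≤ 2*prevB + 2*lam := by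
          calc dist v₁ v₂ ≤ dist v₁ x + dist x v₂ := dist_triangle _ _ _
            _ = dist x v₁ + dist x v₂ := by rw [dist_comm v₁ x]
            _ ≤ (prevB + lam) + (prevB + lam) := add_le_add hd₁ hd₂
            _ = 2*prevB + 2*lam := by ring
        have : r ≤ 2*prevB + 2*lam := le_trans hsep.le this
        rw [hr] at this
        linarith
    · exact absurd (himor V₁ hV₁ V hVP hVor ⟨x, hxU, hxV⟩) (fun f => f)
  · rcases hV with ⟨V₂, hV₂, rfl⟩ | ⟨hVP, hVor⟩
    · exact absurd (himor V₂ hV₂ U hUP hUor ⟨x, hxV, hxU⟩) (fun f => f)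
    · exact hP c U hUP V hVP ⟨x, hxU, hxV⟩

lemma mkLvl_leb {u v : X} (hlam0 : 0 ≤ lam) (huv : dist u v ≤ lam) :
    ∃ c U, U ∈ (mkLvl n h lam prevB P).fam c ∧ u ∈ U ∧ v ∈ U := by
  set r : ℝ := 2*lam + 3*prevB + 1 with hr
  obtain ⟨c, V, hV, huV⟩ := covOf_cover n h r u
  refine ⟨c, attachSet (P c) (enl lam V), Or.inl ⟨V, hV, rfl⟩, ?_, ?_⟩
  · exact subset_attachSet (enl_self hlam0 huV)
  · exact subset_attachSet ⟨u, huV, by rwa [dist_comm]⟩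

lemma mkLvl_diam (hPB : ∀ c, DiamBdd (P c) prevB) (hpB : 0 ≤ prevB)
    (hlam0 : 0 ≤ lam) (c : Fin (n+1)) :
    DiamBdd ((mkLvl n h lam prevB P).fam c) (mkLvl n h lam prevB P).B := by
  set r : ℝ := 2*lam + 3*prevB + 1 with hr
  have hbnd := bndOf_nonneg n h r
  rintro U hU p hp q hq
  rcases hU with ⟨V, hV, rfl⟩ | ⟨hUP, _⟩
  · obtain ⟨vp, hvp, hdp⟩ := attach_near n hPB hpB c hp
    obtain ⟨vq, hvq, hdq⟩ := attach_near n hPB hpB c hq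
    have hmid : dist vp vq ≤ bndOf n h r := bndOf_bound n h r c hV hvp hvq
    calc dist p q ≤ dist p vp + dist vp vq + dist vq q := dist_triangle4 _ _ _ _
      _ = dist p vp + dist vp vq + dist q vq := by rw [dist_comm vq q]
      _ ≤ (prevB + lam) + bndOf n h r + (prevB + lam) := by
          exact add_le_add (add_le_add hdp hmid) hdq
      _ = bndOf n h r + 2*lam + 2*prevB := by ring
      _ = (mkLvl n h lam prevB P).B := rfl
  · have : dist p q ≤ prevB := hPB c U hUP p hp q hq
    have hB : prevB ≤ (mkLvl n h lam prevB P).B := by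
      show prevB ≤ bndOf n h r + 2*lam + 2*prevB
      linarith
    linarith

lemma mkLvl_B_lb (hlam : 1 ≤ lam) (hpB : 0 ≤ prevB) : prevB + 1 ≤ (mkLvl n h lam prevB P).B := by
  have := bndOf_nonneg n h (2*lam + 3*prevB + 1)
  have hlam' := hlam
  show prevB + 1 ≤ bndOf n h (2*lam + 3*prevB + 1) + 2*lam + 2*prevB
  linarith

lemma mkLvl_nest (c : Fin (n+1)) {W : Set X} (hW : W ∈ P c) :
    ∃ W', W' ∈ (mkLvl n h lam prevB P).fam c ∧ W ⊆ W' := by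
  set r : ℝ := 2*lam + 3*prevB + 1 with hr
  by_cases hex : ∃ V ∈ covOf n h r c, (W ∩ enl lam V).Nonempty
  · obtain ⟨V, hV, hne⟩ := hex
    refine ⟨attachSet (P c) (enl lam V), Or.inl ⟨V, hV, rfl⟩, ?_⟩
    intro x hx
    exact Or.inr ⟨W, ⟨hW, hne⟩, hx⟩
  · push_neg at hex
    refine ⟨W, Or.inr ⟨hW, ?_⟩, subset_rfl⟩
    intro V hV
    exact hex V hV

end mkLvlProps

noncomputable def tower : ℕ → Lvl X n
  | 0 => mkLvl n h 1 0 (fun _ => ∅)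
  | (k+1) => mkLvl n h (2*(tower k).B + ((k:ℝ)+2)) (tower k).B (tower k).fam

lemma tower_zero : tower n h 0 = mkLvl n h 1 0 (fun _ => ∅) := rfl
lemma tower_succ (k : ℕ) :
    tower n h (k+1) =
      mkLvl n h (2*(tower n h k).B + ((k:ℝ)+2)) (tower n h k).B (tower n h k).fam := rfl

/-- the main inductive invariant -/
lemma tower_good : ∀ k : ℕ,
    (∀ c, AlmostDisj ((tower n h k).fam c)) ∧
    (∀ c, DiamBdd ((tower n h k).fam c) (tower n h k).B) ∧
    1 ≤ (tower n h k).B ∧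
    ((k:ℝ) + 1 ≤ (tower n h k).lam) ∧
    (∀ u v : X, dist u v ≤ (tower n h k).lam →
      ∃ c U, U ∈ (tower n h k).fam c ∧ u ∈ U ∧ v ∈ U) := by
  intro k
  induction k with
  | zero =>
    have hP : ∀ c : Fin (n+1), AlmostDisj (∅ : Set (Set X)) := by
      intro c U hU; exact absurd hU (Set.notMem_empty U)
    have hPB : ∀ c : Fin (n+1), DiamBdd (∅ : Set (Set X)) 0 := by
      intro c U hU; exact absurd hU (Set.notMem_empty U)
    refine ⟨fun c => mkLvl_almostDisj n h hP hPB le_rfl c,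
            fun c => mkLvl_diam n h hPB le_rfl zero_le_one c, ?_, ?_, ?_⟩
    · have := mkLvl_B_lb n h (lam := 1) (prevB := 0) (P := fun _ => ∅) le_rfl le_rfl
      rw [tower_zero]; simpa using this
    · show ((0:ℕ):ℝ) + 1 ≤ (1:ℝ)
      norm_num
    · intro u v huv
      exact mkLvl_leb n h zero_le_one huv
  | succ k ih =>
    obtain ⟨hAD, hDB, hB1, hlamk, hleb⟩ := ih
    have hB0 : (0:ℝ) ≤ (tower n h k).B := le_trans zero_le_one hB1
    have hlam' : 1 ≤ 2*(tower n h k).B + ((k:ℝ)+2) := by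
      have : (0:ℝ) ≤ (k:ℝ) := Nat.cast_nonneg k
      linarith
    rw [tower_succ]
    refine ⟨fun c => mkLvl_almostDisj n h hAD hDB hB0 c,
            fun c => mkLvl_diam n h hDB hB0 (le_trans zero_le_one hlam') c, ?_, ?_, ?_⟩
    · have := mkLvl_B_lb n h (lam := 2*(tower n h k).B + ((k:ℝ)+2))
        (prevB := (tower n h k).B) (P := (tower n h k).fam) hlam' hB0
      linarith
    · show (((k+1:ℕ)):ℝ) + 1 ≤ 2*(tower n h k).B + ((k:ℝ)+2)
      push_cast
      linarith
    · intro u v huv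
      exact mkLvl_leb n h (le_trans zero_le_one hlam') huv

lemma tower_B_mono (k : ℕ) : (tower n h k).B ≤ (tower n h (k+1)).B := by
  have hB1 := (tower_good n h k).2.2.1
  have hB0 : (0:ℝ) ≤ (tower n h k).B := le_trans zero_le_one hB1
  have hlam' : (1:ℝ) ≤ 2*(tower n h k).B + ((k:ℝ)+2) := by
    have : (0:ℝ) ≤ (k:ℝ) := Nat.cast_nonneg k
    linarith
  have := mkLvl_B_lb n h (lam := 2*(tower n h k).B + ((k:ℝ)+2))
    (prevB := (tower n h k).B) (P := (tower n h k).fam) hlam' hB0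
  rw [tower_succ]
  linarith

lemma tower_B_mono_le {k m : ℕ} (hkm : k ≤ m) : (tower n h k).B ≤ (tower n h m).B := by
  induction m with
  | zero => simp_all
  | succ m ihm =>
    rcases Nat.lt_or_ge k (m+1) with hlt | hge
    · exact le_trans (ihm (Nat.lt_succ_iff.1 hlt)) (tower_B_mono n h m)
    · have : k = m + 1 := le_antisymm hkm hge
      rw [this]

lemma tower_lam_succ (k : ℕ) :
    (tower n h (k+1)).lam = 2*(tower n h k).B + ((k:ℝ)+2) := rfl

/-- linked in color `c` at level `k` -/
def LinkedC (c : Fin (n+1)) (k : ℕ) (u v : X) : Prop :=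
  ∃ U, U ∈ (tower n h k).fam c ∧ u ∈ U ∧ v ∈ U

def Linked (k : ℕ) (u v : X) : Prop := ∃ c, LinkedC n h c k u v

lemma linkedC_succ {c : Fin (n+1)} {k : ℕ} {u v : X} (hl : LinkedC n h c k u v) :
    LinkedC n h c (k+1) u v := by
  obtain ⟨U, hU, hu, hv⟩ := hl
  obtain ⟨W, hW, hsub⟩ := mkLvl_nest n h (lam := 2*(tower n h k).B + ((k:ℝ)+2))
    (prevB := (tower n h k).B) c hU
  rw [← tower_succ] at hW
  exact ⟨W, hW, hsub hu, hsub hv⟩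

lemma linkedC_mono {c : Fin (n+1)} {k m : ℕ} (hkm : k ≤ m) {u v : X}
    (hl : LinkedC n h c k u v) : LinkedC n h c m u v := by
  induction m with
  | zero => simpa [Nat.le_zero.1 hkm] using hl
  | succ m ihm =>
    rcases Nat.lt_or_ge k (m+1) with hlt | hge
    · exact linkedC_succ n h (ihm (Nat.lt_succ_iff.1 hlt))
    · have : k = m + 1 := le_antisymm hkm hge
      rwa [this] at hl

lemma linked_mono {k m : ℕ} (hkm : k ≤ m) {u v : X} (hl : Linked n h k u v) :
    Linked n h m u v := by
  obtain ⟨c, hc⟩ := hl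
  exact ⟨c, linkedC_mono n h hkm hc⟩

lemma linked_symm {k : ℕ} {u v : X} (hl : Linked n h k u v) : Linked n h k v u := by
  obtain ⟨c, U, hU, hu, hv⟩ := hl
  exact ⟨c, U, hU, hv, hu⟩

lemma dist_le_of_linked {k : ℕ} {u v : X} (hl : Linked n h k u v) :
    dist u v ≤ (tower n h k).B := by
  obtain ⟨c, U, hU, hu, hv⟩ := hl
  exact (tower_good n h k).2.1 c U hU u hu v hv

lemma linked_exists (u v : X) : ∃ k, Linked n h k u v := by
  obtain ⟨k, hk⟩ := exists_nat_ge (dist u v)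
  obtain ⟨c, U, hU, hu, hv⟩ := (tower_good n h k).2.2.2.2 u v
    (le_trans hk (by linarith [(tower_good n h k).2.2.2.1]))
  exact ⟨k, c, U, hU, hu, hv⟩

lemma linked_triangle {p q : ℕ} {u v w : X} (h1 : Linked n h p u v)
    (h2 : Linked n h q v w) : Linked n h (max p q + 1) u w := by
  set m := max p q with hm
  have h1' : Linked n h m u v := linked_mono n h (le_max_left _ _) h1
  have h2' : Linked n h m v w := linked_mono n h (le_max_right _ _) h2
  have hd : dist u w ≤ 2*(tower n h m).B := by
    calc dist u w ≤ dist u v + dist v w := dist_triangle _ _ _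
      _ ≤ (tower n h m).B + (tower n h m).B :=
        add_le_add (dist_le_of_linked n h h1') (dist_le_of_linked n h h2')
      _ = 2*(tower n h m).B := by ring
  have hlam : dist u w ≤ (tower n h (m+1)).lam := by
    rw [tower_lam_succ]
    have : (0:ℝ) ≤ (m:ℝ) := Nat.cast_nonneg m
    linarith
  obtain ⟨c, U, hU, hu, hw⟩ := (tower_good n h (m+1)).2.2.2.2 u w hlam
  exact ⟨c, U, hU, hu, hw⟩

noncomputable def kap (u v : X) : ℕ := sInf {k | Linked n h k u v}

lemma kap_linked (u v : X) : Linked n h (kap n h u v) u v :=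
  Nat.sInf_mem (linked_exists n h u v)

lemma kap_le {k : ℕ} {u v : X} (hl : Linked n h k u v) : kap n h u v ≤ k :=
  Nat.sInf_le hl

lemma kap_comm (u v : X) : kap n h u v = kap n h v u := by
  unfold kap
  congr 1
  ext k
  exact ⟨fun hl => linked_symm n h hl, fun hl => linked_symm n h hl⟩

noncomputable def Dfun (u v : X) : ℝ := if u = v then 0 else (kap n h u v : ℝ) + 1

lemma Dfun_self (u : X) : Dfun n h u u = 0 := if_pos rfl

lemma Dfun_nonneg (u v : X) : 0 ≤ Dfun n h u v := by
  unfold Dfun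
  split
  · exact le_refl 0
  · positivity

lemma Dfun_comm (u v : X) : Dfun n h u v = Dfun n h v u := by
  unfold Dfun
  by_cases huv : u = v
  · simp [huv]
  · rw [if_neg huv, if_neg (Ne.symm huv), kap_comm]

lemma Dfun_triangle (u v w : X) : Dfun n h u w ≤ Dfun n h u v + Dfun n h v w := by
  by_cases huw : u = w
  · subst huw
    rw [Dfun_self]
    exact add_nonneg (Dfun_nonneg n h u v) (Dfun_nonneg n h v u)
  by_cases huv : u = v
  · subst huv
    rw [Dfun_self, zero_add]
  by_cases hvw : v = w
  · subst hvw
    rw [Dfun_self, add_zero]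
  have hk : kap n h u w ≤ max (kap n h u v) (kap n h v w) + 1 :=
    kap_le n h (linked_triangle n h (kap_linked n h u v) (kap_linked n h v w))
  rw [Dfun, Dfun, Dfun, if_neg huw, if_neg huv, if_neg hvw]
  have hmax : max (kap n h u v) (kap n h v w) ≤ kap n h u v + kap n h v w :=
    max_le (Nat.le_add_right _ _) (Nat.le_add_left _ _)
  have h2 : kap n h u w ≤ kap n h u v + kap n h v w + 1 :=
    le_trans hk (Nat.add_le_add_right hmax 1)
  have h3 : (kap n h u w : ℝ) ≤ (kap n h u v : ℝ) + (kap n h v w : ℝ) + 1 := by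
    exact_mod_cast h2
  linarith

lemma Dfun_eq_zero {u v : X} (hd : Dfun n h u v = 0) : u = v := by
  by_contra huv
  rw [Dfun, if_neg huv] at hd
  have : (0:ℝ) ≤ (kap n h u v : ℝ) := Nat.cast_nonneg _
  linarith

noncomputable def nagMetric : MetricSpace X where
  dist := Dfun n h
  dist_self := Dfun_self n h
  dist_comm := Dfun_comm n h
  dist_triangle := Dfun_triangle n h
  eq_of_dist_eq_zero := fun hd => Dfun_eq_zero n h hd

lemma coarse_forward : CoarseWith (dist : X → X → ℝ) (Dfun n h) id := by
  intro δ hδ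
  set m : ℕ := ⌈δ⌉₊ with hm
  refine ⟨(m:ℝ) + 1, by positivity, ?_⟩
  intro a b hab
  simp only [id_eq]
  by_cases hab' : a = b
  · rw [hab', Dfun_self]
    positivity
  · have hδm : δ ≤ (m:ℝ) := Nat.le_ceil δ
    have hlam : dist a b ≤ (tower n h m).lam := by
      have := (tower_good n h m).2.2.2.1
      linarith
    obtain ⟨c, U, hU, ha, hb⟩ := (tower_good n h m).2.2.2.2 a b hlam
    have hk : kap n h a b ≤ m := kap_le n h ⟨c, U, hU, ha, hb⟩
    rw [Dfun, if_neg hab']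
    have : (kap n h a b : ℝ) ≤ (m:ℝ) := Nat.cast_le.2 hk
    linarith

lemma coarse_backward : CoarseWith (Dfun n h) (dist : X → X → ℝ) id := by
  intro δ hδ
  set m : ℕ := ⌈δ⌉₊ with hm
  refine ⟨(tower n h m).B + 1, ?_, ?_⟩
  · have := (tower_good n h m).2.2.1
    linarith
  · intro a b hab
    by_cases hab' : a = b
    · rw [hab']
      simp only [id]
      rw [dist_self]
      have := (tower_good n h m).2.2.1
      linarith
    · rw [Dfun, if_neg hab'] at hab
      have hk : (kap n h a b : ℝ) ≤ δ := by linarith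
      have hkm : kap n h a b ≤ m := by
        have h1 : (kap n h a b : ℝ) ≤ (m:ℝ) := le_trans hk (Nat.le_ceil δ)
        exact_mod_cast h1
      have hl : Linked n h m a b := linked_mono n h hkm (kap_linked n h a b)
      have := dist_le_of_linked n h hl
      simp only [id]
      linarith

lemma n2prop : N2Prop n (Dfun n h) := by
  intro x y
  by_cases hrep : ∃ i j : Fin (n+2), i ≠ j ∧ y i = y j
  · obtain ⟨i, j, hij, heq⟩ := hrep
    refine ⟨i, j, hij, ?_⟩
    rw [heq, Dfun_self]
    exact Dfun_nonneg n h x (y j)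
  push_neg at hrep
  by_cases hx : ∃ i, y i = x
  · obtain ⟨i0, hi0⟩ := hx
    obtain ⟨j0, hj0⟩ := exists_ne i0
    refine ⟨j0, i0, hj0, ?_⟩
    rw [hi0, Dfun_comm]
  push_neg at hx
  -- main case: all points distinct from x
  have hlink : ∀ i : Fin (n+2), Linked n h (kap n h x (y i)) x (y i) :=
    fun i => kap_linked n h x (y i)
  choose c U hU hxU hyU using hlink
  have hcard : Fintype.card (Fin (n+1)) < Fintype.card (Fin (n+2)) := by simp
  obtain ⟨i, j, hij, hc⟩ := Fintype.exists_ne_map_eq_of_card_lt c hcard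
  -- wlog kap x (y i) ≤ kap x (y j); handle both cases by the same argument
  have key : ∀ i j : Fin (n+2), i ≠ j → c i = c j →
      kap n h x (y i) ≤ kap n h x (y j) →
      ∃ i' j' : Fin (n+2), i' ≠ j' ∧ Dfun n h (y i') (y j') ≤ Dfun n h x (y i') := by
    intro i j hij hc hle
    -- raise U i to the level of kap x (y j), same color
    have h1 : LinkedC n h (c i) (kap n h x (y j)) x (y i) :=
      linkedC_mono n h hle ⟨U i, hU i, hxU i, hyU i⟩
    obtain ⟨W, hW, hxW, hyiW⟩ := h1
    rw [hc] at hW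
    -- W and U j both contain x at level kap x (y j), color c j: equal
    have hWeq : W = U j :=
      (tower_good n h (kap n h x (y j))).1 (c j) W hW (U j) (hU j) ⟨x, hxW, hxU j⟩
    have hlink' : Linked n h (kap n h x (y j)) (y i) (y j) :=
      ⟨c j, U j, hU j, hWeq ▸ hyiW, hyU j⟩
    have hkle : kap n h (y i) (y j) ≤ kap n h x (y j) := kap_le n h hlink'
    refine ⟨j, i, hij.symm, ?_⟩
    have hyij : y j ≠ y i := hrep j i hij.symm
    have hxyj : x ≠ y j := fun e => hx j e.symm
    rw [Dfun, if_neg hyij, Dfun, if_neg hxyj]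
    rw [kap_comm n h (y j) (y i)]
    have : (kap n h (y i) (y j) : ℝ) ≤ (kap n h x (y j) : ℝ) := Nat.cast_le.2 hkle
    linarith
  rcases le_total (kap n h x (y i)) (kap n h x (y j)) with hle | hle
  · exact key i j hij hc hle
  · exact key j i hij.symm hc.symm hle

end N2Aux

theorem coarse_equiv_to_N2 {X : Type u} [MetricSpace X] (n : ℕ) (h : AsdimLE n X) :
    ∃ (Y : Type u) (_ : MetricSpace Y) (f : X → Y) (g : Y → X),
      CoarseWith dist dist f ∧ CoarseWith dist dist g ∧
      (∃ C : ℝ, 0 < C ∧ (∀ x : X, dist x (g (f x)) ≤ C) ∧ ∀ y : Y, dist y (f (g y)) ≤ C) ∧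
      N2Prop n (fun a b : Y => dist a b) := by
  classical
  refine ⟨X, N2Aux.nagMetric n h, id, id, ?_, ?_, ⟨1, one_pos, ?_, ?_⟩, ?_⟩
  · exact N2Aux.coarse_forward n h
  · exact N2Aux.coarse_backward n h
  · intro x; simp
  · intro y
    exact le_trans (le_of_eq (@dist_self X (N2Aux.nagMetric n h).toPseudoMetricSpace y)) zero_le_one
  · exact N2Aux.n2prop n h
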